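/- Suppose that both α and β are injective. Then the groups G_α and G_β are isomorphic if and only if there exists Q ∈ GL_m(ℤ) such that Q⁻¹·(im α)·Q = im β, i.e. if and only if the images of α and β are conjugate subgroups of GL_m(ℤ). -/

import Mathlib

open Matrix SemidirectProduct

/-- The free abelian group `ℤ^m`, written multiplicatively. -/
abbrev FA (m : ℕ) : Type := Multiplicative (Fin m → ℤ)

/-- The (right) action of `GL_m(ℤ)` on `ℤ^m` (row vectors), as a homomorphism into
`MulAut (ℤ^m)`: the automorphism attached to `M` sends `a` to `a · M⁻¹`, so that in the
semidirect product below one gets the relation `u⁻¹ tᵃ u = t^(a·A_u)`. -/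
def rowAction (m : ℕ) :
    Matrix.GeneralLinearGroup (Fin m) ℤ →* MulAut (FA m) where
  toFun M :=
  { toFun := fun a => Multiplicative.ofAdd
      (Matrix.vecMul (Multiplicative.toAdd a)
        ((↑(M⁻¹) : Matrix (Fin m) (Fin m) ℤ)))
    invFun := fun a => Multiplicative.ofAdd
      (Matrix.vecMul (Multiplicative.toAdd a) ((↑M : Matrix (Fin m) (Fin m) ℤ)))
    left_inv := by
      intro a
      simp [Matrix.vecMul_vecMul]
    right_inv := by
      intro a
      simp [Matrix.vecMul_vecMul]
    map_mul' := by
      intro a b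
      simp [Matrix.add_vecMul] }
  map_one' := by
    ext a
    simp
  map_mul' := by
    intro M N
    ext a
    simp [Matrix.vecMul_vecMul, _root_.mul_inv_rev]

/-- The free-abelian by free group `G_α = F_n ⋉_α ℤ^m` associated to
`α : F_n → GL_m(ℤ)`; it satisfies `u⁻¹ tᵃ u = t^(a·A_u)`. -/
abbrev Gsd {n m : ℕ} (α : FreeGroup (Fin n) →* Matrix.GeneralLinearGroup (Fin m) ℤ) :
    Type :=
  FA m ⋊[(rowAction m).comp α] FreeGroup (Fin n)

/-- `tA α a` is the element `tᵃ` of the abelian part of `G_α`. -/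
def tA {n m : ℕ} (α : FreeGroup (Fin n) →* Matrix.GeneralLinearGroup (Fin m) ℤ)
    (a : Fin m → ℤ) : Gsd α :=
  SemidirectProduct.inl (Multiplicative.ofAdd a)

/-- `fE α u` is the element `u` of the free part of `G_α`. -/
def fE {n m : ℕ} (α : FreeGroup (Fin n) →* Matrix.GeneralLinearGroup (Fin m) ℤ)
    (u : FreeGroup (Fin n)) : Gsd α :=
  SemidirectProduct.inr u

/-- The projection `τ : G_α → ℤ^m`, reading off the abelian part of the normal form
`g = u · tᵃ` (i.e. `τ (fE α u * tA α a) = a`). -/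
def tau {n m : ℕ} (α : FreeGroup (Fin n) →* Matrix.GeneralLinearGroup (Fin m) ℤ)
    (g : Gsd α) : Fin m → ℤ :=
  Matrix.vecMul (Multiplicative.toAdd (SemidirectProduct.left g))
    ((↑(α (SemidirectProduct.right g)) : Matrix (Fin m) (Fin m) ℤ))



set_option maxHeartbeats 1000000

section FG_Facts
open Subgroup

variable {γ : Type*}

/-- distinct generators of a free group do not commute -/
lemma FG.of_not_commute {a b : γ} (hab : a ≠ b) :
    ¬ Commute (FreeGroup.of a) (FreeGroup.of b) := by
  classical
  intro h
  have := congrArg (FreeGroup.lift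
    (fun t => if t = a then Equiv.swap (0:Fin 3) 1 else if t = b then Equiv.swap 1 2 else 1)) h
  simp only [_root_.map_mul, FreeGroup.lift_apply_of, if_pos rfl, if_neg hab, if_neg (Ne.symm hab),
    if_true, eq_self_iff_true] at this
  exact absurd this (by decide)

lemma FG.subsingleton_of_isEmpty [IsEmpty γ] : Subsingleton (FreeGroup γ) := by
  constructor
  intro x y
  have h1 : ∀ z : FreeGroup γ, z = 1 := by
    intro z
    induction z using FreeGroup.induction_on with
    | C1 => rfl
    | of a => exact isEmptyElim a
    | inv_of a ha => rw [ha, inv_one]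
    | mul a b ha hb => rw [ha, hb, _root_.one_mul]
  rw [h1 x, h1 y]

lemma FG.cyclic_of_subsingleton_gens (G : Type*) [Group G] [IsFreeGroup G]
    (h : Subsingleton (IsFreeGroup.Generators G)) : ∃ g : G, ∀ x : G, x ∈ zpowers g := by
  set e := IsFreeGroup.toFreeGroup G with he
  cases isEmpty_or_nonempty (IsFreeGroup.Generators G) with
  | inl hempty =>
    have h1 := FG.subsingleton_of_isEmpty (γ := IsFreeGroup.Generators G)
    have hsub : Subsingleton G := e.toEquiv.subsingleton
    exact ⟨1, fun x => by rw [Subsingleton.elim x 1]; exact one_mem _⟩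
  | inr hne =>
    obtain ⟨a⟩ := hne
    have key : ∀ y : FreeGroup (IsFreeGroup.Generators G), y ∈ zpowers (FreeGroup.of a) := by
      intro y
      have : (⊤ : Subgroup (FreeGroup (IsFreeGroup.Generators G))) ≤ zpowers (FreeGroup.of a) := by
        rw [← FreeGroup.closure_range_of, zpowers_eq_closure]
        apply Subgroup.closure_mono
        rintro _ ⟨b, rfl⟩
        simp [Subsingleton.elim b a]
      exact this trivial
    refine ⟨e.symm (FreeGroup.of a), fun x => ?_⟩
    obtain ⟨k, hk⟩ := key (e x)
    refine ⟨k, ?_⟩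
    show e.symm (FreeGroup.of a) ^ k = x
    have hk' : FreeGroup.of a ^ k = e x := hk
    rw [← _root_.map_zpow, hk', MulEquiv.symm_apply_apply]

lemma FG.exists_gen_of_comm (G : Type*) [Group G] [IsFreeGroup G]
    (h : ∀ a b : G, Commute a b) : ∃ g : G, ∀ x : G, x ∈ zpowers g := by
  apply FG.cyclic_of_subsingleton_gens
  constructor
  intro a b
  by_contra hab
  apply FG.of_not_commute hab
  have := (h (IsFreeGroup.of a) (IsFreeGroup.of b)).map
    (IsFreeGroup.toFreeGroup G).toMonoidHom
  have ha : (IsFreeGroup.toFreeGroup G) (IsFreeGroup.of a) = FreeGroup.of a := by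
    simp [IsFreeGroup.toFreeGroup, IsFreeGroup.of]
  have hb : (IsFreeGroup.toFreeGroup G) (IsFreeGroup.of b) = FreeGroup.of b := by
    simp [IsFreeGroup.toFreeGroup, IsFreeGroup.of]
  simpa [ha, hb] using this

lemma FG.eq_one_of_zpow {g : FreeGroup γ} {k : ℤ} (hk : k ≠ 0) (h : g ^ k = 1) : g = 1 := by
  by_contra hg
  have hord : IsOfFinOrder g := by
    refine isOfFinOrder_iff_pow_eq_one.mpr ⟨k.natAbs, Int.natAbs_pos.mpr hk, ?_⟩
    rcases Int.natAbs_eq k with h' | h'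
    · rw [← _root_.zpow_natCast, ← h', h]
    · rw [← _root_.zpow_natCast, ← neg_neg ((k.natAbs : ℤ)), ← h', _root_.zpow_neg, h, inv_one]
  have hfin : (zpowers g : Set (FreeGroup γ)).Finite := finite_zpowers.mpr hord
  have hfin2 : Finite ↥(zpowers g) := hfin.to_subtype
  set S := IsFreeGroup.Generators ↥(zpowers g) with hS
  cases isEmpty_or_nonempty S with
  | inl hempty =>
    have h1 := FG.subsingleton_of_isEmpty (γ := S)
    have hsub : Subsingleton ↥(zpowers g) :=
      (IsFreeGroup.toFreeGroup ↥(zpowers g)).toEquiv.subsingleton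
    have : (⟨g, mem_zpowers g⟩ : ↥(zpowers g)) = ⟨1, one_mem _⟩ := Subsingleton.elim _ _
    exact hg (by simpa using congrArg Subtype.val this)
  | inr hne =>
    have := Classical.decEq S
    have h2 : Infinite (FreeGroup S) := Infinite.of_surjective _ FreeGroup.norm_surjective
    have h3 : Infinite ↥(zpowers g) :=
      Equiv.infinite_iff (IsFreeGroup.toFreeGroup ↥(zpowers g)).toEquiv |>.mpr h2
    exact not_finite ↥(zpowers g)

lemma FG.zpow_inj {g : FreeGroup γ} (hg : g ≠ 1) {i j : ℤ} (h : g ^ i = g ^ j) : i = j := by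
  by_contra hij
  exact hg (FG.eq_one_of_zpow (sub_ne_zero.mpr hij)
    (by rw [_root_.zpow_sub, h, mul_inv_cancel]))

lemma FG.subgroup_comm_exists_gen (H : Subgroup (FreeGroup γ))
    (h : ∀ x ∈ H, ∀ y ∈ H, Commute x y) : ∃ c ∈ H, ∀ x ∈ H, x ∈ zpowers c := by
  have hc : ∀ a b : ↥H, Commute a b := by
    intro a b
    have := h a a.2 b b.2
    unfold Commute SemiconjBy at this ⊢
    exact Subtype.ext (by push_cast; exact this)
  obtain ⟨g, hg⟩ := FG.exists_gen_of_comm ↥H hc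
  refine ⟨g, g.2, fun x hx => ?_⟩
  obtain ⟨k, hk⟩ := hg ⟨x, hx⟩
  exact ⟨k, by simpa using congrArg Subtype.val hk⟩

lemma FG.closure_comm {s : Set (FreeGroup γ)} (hs : ∀ x ∈ s, ∀ y ∈ s, Commute x y) :
    ∀ x ∈ closure s, ∀ y ∈ closure s, Commute x y := by
  have step : ∀ x ∈ s, ∀ y ∈ closure s, Commute x y := by
    intro x hx y hy
    induction hy using closure_induction with
    | mem z hz => exact hs x hx z hz
    | one => exact Commute.one_right x
    | mul a b _ _ ha hb => exact ha.mul_right hb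
    | inv a _ ha => exact ha.inv_right
  intro x hx y hy
  induction hx using closure_induction with
  | mem z hz => exact step z hz y hy
  | one => exact Commute.one_left y
  | mul a b _ _ ha hb => exact ha.mul_left hb
  | inv a _ ha => exact ha.inv_left

lemma FG.commute_exists_root {u v : FreeGroup γ} (h : Commute u v) :
    ∃ c : FreeGroup γ, u ∈ zpowers c ∧ v ∈ zpowers c := by
  have hs : ∀ x ∈ ({u, v} : Set (FreeGroup γ)), ∀ y ∈ ({u, v} : Set (FreeGroup γ)), Commute x y := by
    rintro x (rfl | rfl) y (rfl | rfl)
    · rfl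
    · exact h
    · exact h.symm
    · rfl
  obtain ⟨c, _, hc⟩ := FG.subgroup_comm_exists_gen (closure {u, v}) (FG.closure_comm hs)
  exact ⟨c, hc u (subset_closure (by simp)), hc v (subset_closure (by simp))⟩

lemma FG.commute_subtype {H : Subgroup (FreeGroup γ)} {a b : ↥H}
    (h : Commute (a : FreeGroup γ) (b : FreeGroup γ)) : Commute a b := by
  unfold Commute SemiconjBy at h ⊢
  exact Subtype.ext (by push_cast; exact h)

/-- an element of a free group that is a nontrivial power of each of two distinct
generators' commuting companions must be trivial -/
lemma FG.eq_one_of_commute_of {a b : γ} (hab : a ≠ b) {z : FreeGroup γ}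
    (ha : Commute z (FreeGroup.of a)) (hb : Commute z (FreeGroup.of b)) : z = 1 := by
  classical
  have key : ∀ t : γ, Commute z (FreeGroup.of t) → ∃ r : ℤ, z = FreeGroup.of t ^ r := by
    intro t hc
    obtain ⟨c, hz, hq⟩ := FG.commute_exists_root hc
    obtain ⟨p, hp⟩ := mem_zpowers_iff.mp hz
    obtain ⟨q, hq⟩ := mem_zpowers_iff.mp hq
    set f : FreeGroup γ →* Multiplicative ℤ :=
      FreeGroup.lift (fun s => if s = t then Multiplicative.ofAdd (1 : ℤ) else 1) with hf
    have h1 : f (c ^ q) = Multiplicative.ofAdd (1 : ℤ) := by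
      rw [hq, hf, FreeGroup.lift_apply_of, if_pos rfl]
    rw [_root_.map_zpow] at h1
    have h2 : q * Multiplicative.toAdd (f c) = 1 := by
      have := congrArg Multiplicative.toAdd h1
      simpa [toAdd_zpow, smul_eq_mul] using this
    have hq1 : q = 1 ∨ q = -1 := Int.isUnit_iff.mp (IsUnit.of_mul_eq_one _ h2)
    have hcq : c = FreeGroup.of t ^ q := by
      rcases hq1 with rfl | rfl
      · simpa using hq
      · rw [← hq]; simp
    refine ⟨q * p, ?_⟩
    rw [← hp, hcq, ← _root_.zpow_mul]
  obtain ⟨r, hr⟩ := key a ha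
  obtain ⟨s, hs⟩ := key b hb
  set f : FreeGroup γ →* Multiplicative ℤ :=
    FreeGroup.lift (fun u => if u = a then Multiplicative.ofAdd (1 : ℤ) else 1) with hf
  have h1 : Multiplicative.toAdd (f z) = r := by
    rw [hr, _root_.map_zpow, hf, FreeGroup.lift_apply_of, if_pos rfl]
    simp [toAdd_zpow]
  have h2 : Multiplicative.toAdd (f z) = 0 := by
    rw [hs, _root_.map_zpow, hf, FreeGroup.lift_apply_of, if_neg (Ne.symm hab)]
    simp
  rw [h1] at h2
  rw [hr, h2, _root_.zpow_zero]

/-- free groups are commutative-transitive -/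
lemma FG.commute_trans {z u v : FreeGroup γ} (hz : z ≠ 1)
    (hu : Commute z u) (hv : Commute z v) : Commute u v := by
  set H := closure ({z, u, v} : Set (FreeGroup γ)) with hH
  have hzmem : z ∈ H := subset_closure (by simp)
  have humem : u ∈ H := subset_closure (by simp)
  have hvmem : v ∈ H := subset_closure (by simp)
  have hcen : ∀ x ∈ H, Commute z x := by
    intro x hx
    induction hx using closure_induction with
    | mem w hw =>
      simp only [Set.mem_insert_iff, Set.mem_singleton_iff] at hw
      rcases hw with rfl | rfl | rfl
      · exact Commute.refl _
      · exact hu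
      · exact hv
    | one => exact Commute.one_right z
    | mul a b _ _ ha hb => exact ha.mul_right hb
    | inv a _ ha => exact ha.inv_right
  set e := IsFreeGroup.toFreeGroup ↥H with he
  have hsub : Subsingleton (IsFreeGroup.Generators ↥H) := by
    constructor
    intro s t
    by_contra hst
    have hs' : Commute (⟨z, hzmem⟩ : ↥H) (e.symm (FreeGroup.of s)) :=
      FG.commute_subtype (hcen _ (e.symm (FreeGroup.of s)).2)
    have ht' : Commute (⟨z, hzmem⟩ : ↥H) (e.symm (FreeGroup.of t)) :=
      FG.commute_subtype (hcen _ (e.symm (FreeGroup.of t)).2)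
    have hs'' := hs'.map e.toMonoidHom
    have ht'' := ht'.map e.toMonoidHom
    simp only [MulEquiv.coe_toMonoidHom, MulEquiv.apply_symm_apply] at hs'' ht''
    have : e ⟨z, hzmem⟩ = 1 := FG.eq_one_of_commute_of hst hs'' ht''
    have : (⟨z, hzmem⟩ : ↥H) = 1 := by
      have := congrArg e.symm this
      simpa using this
    exact hz (by simpa using congrArg Subtype.val this)
  obtain ⟨g, hg⟩ := FG.cyclic_of_subsingleton_gens ↥H hsub
  obtain ⟨k, hk⟩ := mem_zpowers_iff.mp (hg ⟨u, humem⟩)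
  obtain ⟨l, hl⟩ := mem_zpowers_iff.mp (hg ⟨v, hvmem⟩)
  have hu' : ((g : FreeGroup γ)) ^ k = u := by
    have := congrArg Subtype.val hk
    push_cast at this
    exact this
  have hv' : ((g : FreeGroup γ)) ^ l = v := by
    have := congrArg Subtype.val hl
    push_cast at this
    exact this
  rw [← hu', ← hv']
  exact (Commute.refl _).zpow_zpow k l

/-- a normal abelian subgroup of a free group of rank ≥ 2 is trivial -/
lemma FG.normal_comm_eq_bot {n : ℕ} (hn : 2 ≤ n) (P : Subgroup (FreeGroup (Fin n)))
    (hP : P.Normal) (hcomm : ∀ x ∈ P, ∀ y ∈ P, Commute x y) : P = ⊥ := by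
  by_contra hbot
  obtain ⟨w, hwP, hw1⟩ := (P.bot_or_exists_ne_one).resolve_left hbot
  obtain ⟨c, hcP, hgen⟩ := FG.subgroup_comm_exists_gen P hcomm
  have hc1 : c ≠ 1 := by
    rintro rfl
    obtain ⟨k, hk⟩ := mem_zpowers_iff.mp (hgen w hwP)
    rw [_root_.one_zpow] at hk
    exact hw1 hk.symm
  have hsq : ∀ g : FreeGroup (Fin n), Commute c (g * g) := by
    intro g
    have hmem1 : g⁻¹ * c * g ∈ P := by
      have := hP.conj_mem c hcP g⁻¹
      simpa using this
    have hmem2 : g * c * g⁻¹ ∈ P := hP.conj_mem c hcP g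
    obtain ⟨j, hj⟩ := mem_zpowers_iff.mp (hgen _ hmem1)
    obtain ⟨i, hi⟩ := mem_zpowers_iff.mp (hgen _ hmem2)
    have hji : c ^ (j * i) = c ^ (1 : ℤ) := by
      rw [_root_.zpow_one]
      calc c ^ (j * i) = (c ^ i) ^ j := by rw [_root_.mul_comm, _root_.zpow_mul]
        _ = (g * c * g⁻¹) ^ j := by rw [hi]
        _ = g * c ^ j * g⁻¹ := by
            have := _root_.map_zpow (MulAut.conj g) c j
            simpa using this.symm
        _ = g * (g⁻¹ * c * g) * g⁻¹ := by rw [← hj]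
        _ = c := by group
    have hij1 : j * i = 1 := FG.zpow_inj hc1 hji
    have hj1 : j = 1 ∨ j = -1 := Int.isUnit_iff.mp (IsUnit.of_mul_eq_one _ hij1)
    have hjj : j * j = 1 := by rcases hj1 with h | h <;> rw [h] <;> norm_num
    have key : (g * g)⁻¹ * c * (g * g) = c := by
      calc (g * g)⁻¹ * c * (g * g) = g⁻¹ * (g⁻¹ * c * g) * g := by group
        _ = g⁻¹ * c ^ j * g := by rw [← hj]
        _ = (g⁻¹ * c * g) ^ j := by
            have := (_root_.map_zpow (MulAut.conj g⁻¹) c j).symm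
            simpa using this.symm
        _ = (c ^ j) ^ j := by rw [← hj]
        _ = c ^ (j * j) := by rw [← _root_.zpow_mul]
        _ = c := by rw [hjj, _root_.zpow_one]
    calc c * (g * g) = (g * g) * ((g * g)⁻¹ * c * (g * g)) := by group
      _ = (g * g) * c := by rw [key]
  have h01 : (⟨0, by omega⟩ : Fin n) ≠ ⟨1, by omega⟩ := by
    intro h
    have := congrArg Fin.val h
    simp at this
  set x : FreeGroup (Fin n) := FreeGroup.of ⟨0, by omega⟩ with hx
  set y : FreeGroup (Fin n) := FreeGroup.of ⟨1, by omega⟩ with hy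
  have hcom : Commute (x * x) (y * y) := FG.commute_trans hc1 (hsq x) (hsq y)
  classical
  have := hcom.map (FreeGroup.lift (fun t : Fin n =>
    if t = (⟨0, by omega⟩ : Fin n) then finRotate 4
    else if t = (⟨1, by omega⟩ : Fin n) then Equiv.swap 0 1 * Equiv.swap 1 2 else 1))
  unfold Commute SemiconjBy at this
  simp only [_root_.map_mul, FreeGroup.lift_apply_of, hx, hy, if_pos rfl, if_neg h01,
    if_neg (Ne.symm h01), if_true, eq_self_iff_true] at this
  exact absurd this (by decide)


end FG_Facts

section Fwd

variable {n m : ℕ} {α β : FreeGroup (Fin n) →* Matrix.GeneralLinearGroup (Fin m) ℤ}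

lemma SD.eq_inl_of_right_eq_one (g : Gsd α) (h : g.right = 1) :
    g = SemidirectProduct.inl g.left := by
  have := inl_left_mul_inr_right g
  rw [h, _root_.map_one, _root_.mul_one] at this
  exact this.symm

/-- the image of the abelian kernel under an isomorphism stays in the abelian kernel -/
lemma SD.right_inl_eq_one (hn : 2 ≤ n) (Φ : Gsd α ≃* Gsd β) (x : FA m) :
    (Φ (SemidirectProduct.inl x)).right = 1 := by
  set Pr : Subgroup (FreeGroup (Fin n)) :=
    Subgroup.map rightHom (Subgroup.map Φ.toMonoidHom
      (MonoidHom.range (inl : FA m →* Gsd α))) with hPr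
  have hnorm1 : (MonoidHom.range (inl : FA m →* Gsd α)).Normal := by
    rw [range_inl_eq_ker_rightHom]
    exact MonoidHom.normal_ker _
  have hnorm2 : (Subgroup.map Φ.toMonoidHom
      (MonoidHom.range (inl : FA m →* Gsd α))).Normal :=
    Subgroup.Normal.map hnorm1 Φ.toMonoidHom Φ.surjective
  have hnorm3 : Pr.Normal :=
    Subgroup.Normal.map hnorm2 rightHom rightHom_surjective
  have hcomm : ∀ x ∈ Pr, ∀ y ∈ Pr, Commute x y := by
    rintro _ hx _ hy
    rw [hPr, Subgroup.mem_map] at hx hy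
    obtain ⟨x', hx', rfl⟩ := hx
    obtain ⟨y', hy', rfl⟩ := hy
    rw [Subgroup.mem_map] at hx' hy'
    obtain ⟨x'', hx'', rfl⟩ := hx'
    obtain ⟨y'', hy'', rfl⟩ := hy'
    obtain ⟨a, rfl⟩ := hx''
    obtain ⟨b, rfl⟩ := hy''
    have hc : Commute (inl a : Gsd α) (inl b) := by
      unfold Commute SemiconjBy
      rw [← _root_.map_mul, ← _root_.map_mul, _root_.mul_comm]
    exact (hc.map Φ.toMonoidHom).map rightHom
  have hbot : Pr = ⊥ := FG.normal_comm_eq_bot hn Pr hnorm3 hcomm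
  have hmem : rightHom (Φ (inl x)) ∈ Pr := by
    rw [hPr]
    exact Subgroup.mem_map_of_mem _ (Subgroup.mem_map_of_mem _ ⟨x, rfl⟩)
  rw [hbot, Subgroup.mem_bot] at hmem
  exact hmem

lemma SD.conj_inl (b : FA m) (v : FreeGroup (Fin n)) (x : FA m) :
    ((inl b * inr v) * inl x * (inl b * inr v)⁻¹ : Gsd β)
      = inl (((rowAction m).comp β v) x) := by
  have h1 : ((inl b * inr v) * inl x * (inl b * inr v)⁻¹ : Gsd β)
      = inl b * (inr v * inl x * inr v⁻¹) * (inl b)⁻¹ := by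
    rw [_root_.mul_inv_rev, ← _root_.map_inv, ← _root_.map_inv]
    simp only [mul_assoc]
  rw [h1, ← inl_aut, ← _root_.map_inv, ← _root_.map_mul, ← _root_.map_mul]
  congr 1
  rw [_root_.mul_comm b, mul_assoc, mul_inv_cancel, _root_.mul_one]

lemma SD.iso_to_conj (hn : 2 ≤ n) (Φ : Gsd α ≃* Gsd β) :
    ∃ Q : Matrix.GeneralLinearGroup (Fin m) ℤ,
      ∀ M : Matrix.GeneralLinearGroup (Fin m) ℤ,
        M ∈ α.range ↔ Q⁻¹ * M * Q ∈ β.range := by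
  have hr : ∀ x : FA m, (Φ (inl x)).right = 1 := SD.right_inl_eq_one hn Φ
  have hr' : ∀ x : FA m, (Φ.symm (inl x)).right = 1 := SD.right_inl_eq_one hn Φ.symm
  -- additive endomorphisms induced on ℤ^m
  set q : (Fin m → ℤ) →+ (Fin m → ℤ) :=
    { toFun := fun a => Multiplicative.toAdd (Φ (inl (Multiplicative.ofAdd a))).left
      map_zero' := by
        show Multiplicative.toAdd (Φ (inl (Multiplicative.ofAdd (0: Fin m → ℤ)))).left = 0
        have h0 : (Multiplicative.ofAdd (0 : Fin m → ℤ)) = 1 := rfl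
        rw [h0, _root_.map_one, _root_.map_one, one_left]
        rfl
      map_add' := by
        intro a b
        have h1 : Φ (inl (Multiplicative.ofAdd (a + b)))
            = Φ (inl (Multiplicative.ofAdd a)) * Φ (inl (Multiplicative.ofAdd b)) := by
          rw [← _root_.map_mul, ← _root_.map_mul]
          rfl
        have h2 := mul_left (Φ (inl (Multiplicative.ofAdd a)))
          (Φ (inl (Multiplicative.ofAdd b)))
        rw [hr, _root_.map_one, MulAut.one_apply] at h2
        show Multiplicative.toAdd (Φ (inl (Multiplicative.ofAdd (a+b)))).left = _
        rw [h1, h2]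
        rfl } with hq
  set r : (Fin m → ℤ) →+ (Fin m → ℤ) :=
    { toFun := fun a => Multiplicative.toAdd (Φ.symm (inl (Multiplicative.ofAdd a))).left
      map_zero' := by
        show Multiplicative.toAdd (Φ.symm (inl (Multiplicative.ofAdd (0: Fin m → ℤ)))).left = 0
        have h0 : (Multiplicative.ofAdd (0 : Fin m → ℤ)) = 1 := rfl
        rw [h0, _root_.map_one, _root_.map_one, one_left]
        rfl
      map_add' := by
        intro a b
        have h1 : Φ.symm (inl (Multiplicative.ofAdd (a + b)))
            = Φ.symm (inl (Multiplicative.ofAdd a)) * Φ.symm (inl (Multiplicative.ofAdd b)) := by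
          rw [← _root_.map_mul, ← _root_.map_mul]
          rfl
        have h2 := mul_left (Φ.symm (inl (Multiplicative.ofAdd a)))
          (Φ.symm (inl (Multiplicative.ofAdd b)))
        rw [hr', _root_.map_one, MulAut.one_apply] at h2
        show Multiplicative.toAdd (Φ.symm (inl (Multiplicative.ofAdd (a+b)))).left = _
        rw [h1, h2]
        rfl } with hrdef
  have hinl : ∀ x : FA m, Φ (inl x) = inl (Multiplicative.ofAdd (q (Multiplicative.toAdd x))) := by
    intro x
    exact SD.eq_inl_of_right_eq_one (Φ (inl x)) (hr x)
  have hinl' : ∀ x : FA m, Φ.symm (inl x) = inl (Multiplicative.ofAdd (r (Multiplicative.toAdd x))) := by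
    intro x
    exact SD.eq_inl_of_right_eq_one (Φ.symm (inl x)) (hr' x)
  have hqr : ∀ a, q (r a) = a := by
    intro a
    have h2 : (inl (Multiplicative.ofAdd a) : Gsd β) = inl (Multiplicative.ofAdd (q (r a))) := by
      conv_lhs => rw [← MulEquiv.apply_symm_apply Φ (inl (Multiplicative.ofAdd a))]
      rw [show Φ.symm (inl (Multiplicative.ofAdd a)) = inl (Multiplicative.ofAdd (r a)) from hinl' _,
        show Φ (inl (Multiplicative.ofAdd (r a))) = inl (Multiplicative.ofAdd (q (r a))) from hinl _]
    exact (congrArg Multiplicative.toAdd (inl_injective h2)).symm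
  have hrq : ∀ a, r (q a) = a := by
    intro a
    have h2 : (inl (Multiplicative.ofAdd a) : Gsd α) = inl (Multiplicative.ofAdd (r (q a))) := by
      conv_lhs => rw [← MulEquiv.symm_apply_apply Φ (inl (Multiplicative.ofAdd a))]
      rw [show Φ (inl (Multiplicative.ofAdd a)) = inl (Multiplicative.ofAdd (q a)) from hinl _,
        show Φ.symm (inl (Multiplicative.ofAdd (q a))) = inl (Multiplicative.ofAdd (r (q a))) from hinl' _]
    exact (congrArg Multiplicative.toAdd (inl_injective h2)).symm
  -- matrices
  set M : Matrix (Fin m) (Fin m) ℤ := LinearMap.toMatrix' q.toIntLinearMap with hMdef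
  set N : Matrix (Fin m) (Fin m) ℤ := LinearMap.toMatrix' r.toIntLinearMap with hNdef
  have hM : ∀ a, M *ᵥ a = q a := by
    intro a
    rw [hMdef, ← Matrix.toLin'_apply, Matrix.toLin'_toMatrix']
    rfl
  have hN : ∀ a, N *ᵥ a = r a := by
    intro a
    rw [hNdef, ← Matrix.toLin'_apply, Matrix.toLin'_toMatrix']
    rfl
  have hMN : M * N = 1 := by
    rw [hMdef, hNdef, ← LinearMap.toMatrix'_comp, ← LinearMap.toMatrix'_id (R := ℤ) (n := Fin m)]
    congr 1
    apply LinearMap.ext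
    intro a
    exact hqr a
  have hNM : N * M = 1 := by
    rw [hMdef, hNdef, ← LinearMap.toMatrix'_comp, ← LinearMap.toMatrix'_id (R := ℤ) (n := Fin m)]
    congr 1
    apply LinearMap.ext
    intro a
    exact hrq a
  set Qu : Matrix.GeneralLinearGroup (Fin m) ℤ :=
    ⟨Mᵀ, Nᵀ, by rw [← Matrix.transpose_mul, hNM, Matrix.transpose_one],
      by rw [← Matrix.transpose_mul, hMN, Matrix.transpose_one]⟩ with hQu
  have hQa : ∀ a : Fin m → ℤ, Matrix.vecMul a (↑Qu : Matrix (Fin m) (Fin m) ℤ) = q a := by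
    intro a
    show Matrix.vecMul a Mᵀ = q a
    rw [Matrix.vecMul_transpose, hM]
  have key1 : ∀ x : FA m, Φ (inl x)
      = inl (Multiplicative.ofAdd (Matrix.vecMul (Multiplicative.toAdd x) (↑Qu : Matrix (Fin m) (Fin m) ℤ))) := by
    intro x
    rw [hQa]
    exact hinl x
  set φ : FreeGroup (Fin n) →* FreeGroup (Fin n) :=
    rightHom.comp (Φ.toMonoidHom.comp inr) with hφ
  -- key conjugation relation
  have key2 : ∀ u : FreeGroup (Fin n), β (φ u) = Qu⁻¹ * α u * Qu := by
    intro u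
    have hW : Φ (inr u) = inl (Φ (inr u)).left * inr (φ u) := by
      have h0 : φ u = (Φ (inr u)).right := rfl
      rw [h0, inl_left_mul_inr_right]
    have hrow : ∀ x : FA m,
        inl (Multiplicative.ofAdd (Matrix.vecMul (Multiplicative.toAdd (((rowAction m).comp α u) x)) (↑Qu : Matrix (Fin m) (Fin m) ℤ)))
          = (inl (Multiplicative.ofAdd (Matrix.vecMul (Matrix.vecMul (Multiplicative.toAdd x) (↑Qu : Matrix (Fin m) (Fin m) ℤ)) (↑((β (φ u))⁻¹) : Matrix (Fin m) (Fin m) ℤ))) : Gsd β) := by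
      intro x
      have h1 : Φ (inl (((rowAction m).comp α u) x))
          = Φ (inr u) * Φ (inl x) * (Φ (inr u))⁻¹ := by
        rw [← _root_.map_inv, ← _root_.map_mul, ← _root_.map_mul]
        congr 1
        have := inl_aut (φ := (rowAction m).comp α) u x
        rw [this, _root_.map_inv]
      rw [key1, key1, hW] at h1
      rw [SD.conj_inl (Φ (inr u)).left (φ u)
        (Multiplicative.ofAdd (Matrix.vecMul (Multiplicative.toAdd x) (↑Qu : Matrix (Fin m) (Fin m) ℤ)))] at h1
      exact h1
    have hmat : (↑((α u)⁻¹) : Matrix (Fin m) (Fin m) ℤ) * (↑Qu : Matrix (Fin m) (Fin m) ℤ)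
        = (↑Qu : Matrix (Fin m) (Fin m) ℤ) * (↑((β (φ u))⁻¹) : Matrix (Fin m) (Fin m) ℤ) := by
      ext i j
      have h2 := hrow (Multiplicative.ofAdd (Pi.single i 1))
      have h3 := congrArg Multiplicative.toAdd (inl_injective h2)
      have h4 : Matrix.vecMul (Matrix.vecMul (Pi.single i (1:ℤ)) (↑((α u)⁻¹) : Matrix (Fin m) (Fin m) ℤ)) (↑Qu : Matrix (Fin m) (Fin m) ℤ)
          = Matrix.vecMul (Matrix.vecMul (Pi.single i (1:ℤ)) (↑Qu : Matrix (Fin m) (Fin m) ℤ)) (↑((β (φ u))⁻¹) : Matrix (Fin m) (Fin m) ℤ) := h3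
      rw [Matrix.vecMul_vecMul, Matrix.vecMul_vecMul, Matrix.single_one_vecMul, Matrix.single_one_vecMul] at h4
      exact congrFun h4 j
    have hu2 : (α u)⁻¹ * Qu = Qu * (β (φ u))⁻¹ := by
      apply Units.ext
      rw [Units.val_mul, Units.val_mul]
      exact hmat
    calc β (φ u) = (Qu * (β (φ u))⁻¹)⁻¹ * Qu := by group
      _ = ((α u)⁻¹ * Qu)⁻¹ * Qu := by rw [hu2]
      _ = Qu⁻¹ * α u * Qu := by group
  have hsurj : Function.Surjective φ := by
    intro v
    refine ⟨(Φ.symm (inr v)).right, ?_⟩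
    set w := Φ.symm (inr v) with hw
    have hww : w = inl w.left * inr w.right := (inl_left_mul_inr_right w).symm
    have h2 : (inr v : Gsd β) = Φ (inl w.left) * Φ (inr w.right) := by
      rw [← _root_.map_mul, ← hww, hw, MulEquiv.apply_symm_apply]
    have h3 := congrArg rightHom h2
    rw [_root_.map_mul, rightHom_inr] at h3
    have h4 : rightHom (Φ (inl w.left)) = 1 := hr w.left
    rw [h4, _root_.one_mul] at h3
    exact h3.symm
  refine ⟨Qu, fun K => ⟨?_, ?_⟩⟩
  · rintro ⟨u, rfl⟩
    exact ⟨φ u, key2 u⟩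
  · rintro ⟨v', hv'⟩
    obtain ⟨u, rfl⟩ := hsurj v'
    rw [key2 u] at hv'
    refine ⟨u, ?_⟩
    have h5 := mul_right_cancel hv'
    exact mul_left_cancel h5
end Fwd

section Bwd
variable {n m : ℕ} {α β : FreeGroup (Fin n) →* Matrix.GeneralLinearGroup (Fin m) ℤ}

/-- the multiplicative version of right multiplication by a matrix -/
def rmul (m : ℕ) (Q : Matrix.GeneralLinearGroup (Fin m) ℤ) : FA m →* FA m where
  toFun a := Multiplicative.ofAdd
    (Matrix.vecMul (Multiplicative.toAdd a) ((↑Q : Matrix (Fin m) (Fin m) ℤ)))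
  map_one' := by
    show Multiplicative.ofAdd (Matrix.vecMul 0 _) = 1
    simp [Matrix.zero_vecMul]
  map_mul' := by
    intro a b
    show Multiplicative.ofAdd (Matrix.vecMul (Multiplicative.toAdd a + Multiplicative.toAdd b) _) = _
    rw [Matrix.add_vecMul]
    rfl

/-- conjugate homomorphisms give isomorphic semidirect products -/
lemma SD.conj_to_iso (hα : Function.Injective α) (hβ : Function.Injective β)
    (Q : Matrix.GeneralLinearGroup (Fin m) ℤ)
    (hQ : ∀ M : Matrix.GeneralLinearGroup (Fin m) ℤ,
      M ∈ α.range ↔ Q⁻¹ * M * Q ∈ β.range) :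
    Nonempty (Gsd α ≃* Gsd β) := by
  classical
  -- the induced automorphism of the free group
  have hv : ∀ i : Fin n, ∃ v, β v = Q⁻¹ * α (FreeGroup.of i) * Q := by
    intro i
    exact (hQ (α (FreeGroup.of i))).mp ⟨FreeGroup.of i, rfl⟩
  have hu : ∀ i : Fin n, ∃ u, α u = Q * β (FreeGroup.of i) * Q⁻¹ := by
    intro i
    have h1 : Q⁻¹ * (Q * β (FreeGroup.of i) * Q⁻¹) * Q ∈ β.range := by
      have : Q⁻¹ * (Q * β (FreeGroup.of i) * Q⁻¹) * Q = β (FreeGroup.of i) := by group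
      rw [this]
      exact ⟨FreeGroup.of i, rfl⟩
    obtain ⟨u, huu⟩ := (hQ (Q * β (FreeGroup.of i) * Q⁻¹)).mpr h1
    exact ⟨u, huu⟩
  set φ : FreeGroup (Fin n) →* FreeGroup (Fin n) :=
    FreeGroup.lift (fun i => Classical.choose (hv i)) with hφ
  set ψ : FreeGroup (Fin n) →* FreeGroup (Fin n) :=
    FreeGroup.lift (fun i => Classical.choose (hu i)) with hψ
  have hφβ : ∀ w, β (φ w) = Q⁻¹ * α w * Q := by
    have h1 : β.comp φ = ((MulAut.conj Q⁻¹).toMonoidHom.comp α) := by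
      apply FreeGroup.ext_hom
      intro i
      show β (φ (FreeGroup.of i)) = MulAut.conj Q⁻¹ (α (FreeGroup.of i))
      rw [hφ, FreeGroup.lift_apply_of, Classical.choose_spec (hv i), MulAut.conj_apply, _root_.inv_inv]
    intro w
    have := congrArg (fun f => f w) h1
    simpa [MulAut.conj_apply, _root_.inv_inv] using this
  have hψα : ∀ w, α (ψ w) = Q * β w * Q⁻¹ := by
    have h1 : α.comp ψ = ((MulAut.conj Q).toMonoidHom.comp β) := by
      apply FreeGroup.ext_hom
      intro i
      show α (ψ (FreeGroup.of i)) = MulAut.conj Q (β (FreeGroup.of i))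
      rw [hψ, FreeGroup.lift_apply_of, Classical.choose_spec (hu i), MulAut.conj_apply]
    intro w
    have := congrArg (fun f => f w) h1
    simpa [MulAut.conj_apply] using this
  have hψφ : ∀ w, ψ (φ w) = w := by
    intro w
    apply hα
    rw [hψα, hφβ]
    group
  have hφψ : ∀ w, φ (ψ w) = w := by
    intro w
    apply hβ
    rw [hφβ, hψα]
    group
  -- compatibility
  have hcompat : ∀ g : FreeGroup (Fin n),
      (rmul m Q).comp (((rowAction m).comp α g) : MulAut (FA m)).toMonoidHom
        = (((rowAction m).comp β (φ g)) : MulAut (FA m)).toMonoidHom.comp (rmul m Q) := by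
    intro g
    refine MonoidHom.ext fun x => ?_
    show Multiplicative.ofAdd (Matrix.vecMul (Matrix.vecMul (Multiplicative.toAdd x)
        ((↑((α g)⁻¹) : Matrix (Fin m) (Fin m) ℤ))) ((↑Q : Matrix (Fin m) (Fin m) ℤ)))
      = Multiplicative.ofAdd (Matrix.vecMul (Matrix.vecMul (Multiplicative.toAdd x)
        ((↑Q : Matrix (Fin m) (Fin m) ℤ))) ((↑((β (φ g))⁻¹) : Matrix (Fin m) (Fin m) ℤ)))
    rw [Matrix.vecMul_vecMul, Matrix.vecMul_vecMul]
    have h1 : (β (φ g))⁻¹ = Q⁻¹ * (α g)⁻¹ * Q := by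
      rw [hφβ]
      group
    have h2 : Q * (β (φ g))⁻¹ = (α g)⁻¹ * Q := by
      rw [h1]
      group
    have hmm := calc (↑((α g)⁻¹) : Matrix (Fin m) (Fin m) ℤ) * ↑Q = ↑((α g)⁻¹ * Q) := (Units.val_mul _ _).symm
      _ = ↑(Q * (β (φ g))⁻¹) := by rw [h2]
      _ = ↑Q * (↑((β (φ g))⁻¹) : Matrix (Fin m) (Fin m) ℤ) := Units.val_mul _ _
    rw [hmm]
  have hcompat' : ∀ g : FreeGroup (Fin n),
      (rmul m Q⁻¹).comp (((rowAction m).comp β g) : MulAut (FA m)).toMonoidHom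
        = (((rowAction m).comp α (ψ g)) : MulAut (FA m)).toMonoidHom.comp (rmul m Q⁻¹) := by
    intro g
    refine MonoidHom.ext fun x => ?_
    show Multiplicative.ofAdd (Matrix.vecMul (Matrix.vecMul (Multiplicative.toAdd x)
        ((↑((β g)⁻¹) : Matrix (Fin m) (Fin m) ℤ))) ((↑Q⁻¹ : Matrix (Fin m) (Fin m) ℤ)))
      = Multiplicative.ofAdd (Matrix.vecMul (Matrix.vecMul (Multiplicative.toAdd x)
        ((↑Q⁻¹ : Matrix (Fin m) (Fin m) ℤ))) ((↑((α (ψ g))⁻¹) : Matrix (Fin m) (Fin m) ℤ)))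
    rw [Matrix.vecMul_vecMul, Matrix.vecMul_vecMul]
    have h1 : (α (ψ g))⁻¹ = Q * (β g)⁻¹ * Q⁻¹ := by
      rw [hψα]
      group
    have h2 : Q⁻¹ * (α (ψ g))⁻¹ = (β g)⁻¹ * Q⁻¹ := by
      rw [h1]
      group
    have hmm := calc (↑((β g)⁻¹) : Matrix (Fin m) (Fin m) ℤ) * ↑Q⁻¹ = ↑((β g)⁻¹ * Q⁻¹) := (Units.val_mul _ _).symm
      _ = ↑(Q⁻¹ * (α (ψ g))⁻¹) := by rw [h2]
      _ = ↑Q⁻¹ * (↑((α (ψ g))⁻¹) : Matrix (Fin m) (Fin m) ℤ) := Units.val_mul _ _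
    rw [hmm]
  set Φ : Gsd α →* Gsd β := SemidirectProduct.map (rmul m Q) φ hcompat with hΦ
  set Φ' : Gsd β →* Gsd α := SemidirectProduct.map (rmul m Q⁻¹) ψ hcompat' with hΦ'
  have hQQ : (↑Q : Matrix (Fin m) (Fin m) ℤ) * (↑Q⁻¹ : Matrix (Fin m) (Fin m) ℤ) = 1 := by
    rw [← Units.val_mul, mul_inv_cancel, Units.val_one]
  have hQQ' : (↑Q⁻¹ : Matrix (Fin m) (Fin m) ℤ) * (↑Q : Matrix (Fin m) (Fin m) ℤ) = 1 := by
    rw [← Units.val_mul, inv_mul_cancel, Units.val_one]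
  have hrmul : ∀ x : FA m, rmul m Q⁻¹ (rmul m Q x) = x := by
    intro x
    simp only [rmul, MonoidHom.coe_mk, OneHom.coe_mk, toAdd_ofAdd,
      Matrix.vecMul_vecMul, hQQ, Matrix.vecMul_one, ofAdd_toAdd]
  have hrmul' : ∀ x : FA m, rmul m Q (rmul m Q⁻¹ x) = x := by
    intro x
    simp only [rmul, MonoidHom.coe_mk, OneHom.coe_mk, toAdd_ofAdd,
      Matrix.vecMul_vecMul, hQQ', Matrix.vecMul_one, ofAdd_toAdd]
  have h1 : Φ'.comp Φ = MonoidHom.id (Gsd α) := by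
    apply SemidirectProduct.hom_ext
    · apply MonoidHom.ext
      intro x
      show Φ' (Φ (inl x)) = inl x
      rw [hΦ, hΦ', map_inl, map_inl, hrmul]
    · apply MonoidHom.ext
      intro u
      show Φ' (Φ (inr u)) = inr u
      rw [hΦ, hΦ', map_inr, map_inr, hψφ]
  have h2 : Φ.comp Φ' = MonoidHom.id (Gsd β) := by
    apply SemidirectProduct.hom_ext
    · apply MonoidHom.ext
      intro x
      show Φ (Φ' (inl x)) = inl x
      rw [hΦ, hΦ', map_inl, map_inl, hrmul']
    · apply MonoidHom.ext
      intro u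
      show Φ (Φ' (inr u)) = inr u
      rw [hΦ, hΦ', map_inr, map_inr, hφψ]
  exact ⟨MonoidHom.toMulEquiv Φ Φ' h1 h2⟩
end Bwd

/-- For faithful actions, `G_α ≅ G_β` iff the images of `α` and `β` are conjugate
subgroups of `GL_m(ℤ)`. -/
theorem iso_iff_conj_images {n m : ℕ} (hn : 2 ≤ n) (hm : 1 ≤ m)
    (α β : FreeGroup (Fin n) →* Matrix.GeneralLinearGroup (Fin m) ℤ)
    (hα : Function.Injective α) (hβ : Function.Injective β) :
    Nonempty (Gsd α ≃* Gsd β) ↔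
      ∃ Q : Matrix.GeneralLinearGroup (Fin m) ℤ,
        ∀ M : Matrix.GeneralLinearGroup (Fin m) ℤ,
          M ∈ α.range ↔ Q⁻¹ * M * Q ∈ β.range := by
  constructor
  · rintro ⟨Φ⟩
    exact SD.iso_to_conj hn Φ
  · rintro ⟨Q, hQ⟩
    exact SD.conj_to_iso hα hβ Q hQ
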